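/- Let k ≥ 1 be an integer and let ρ : ℂ² → ℝ be a polynomial function in the underlying real coordinates (i.e. ρ(z) = P(Re z₁, Im z₁, Re z₂, Im z₂) for some real polynomial P) which is homogeneous of degree 2k (ρ(t·z) = t^{2k}·ρ(z) for all real t ≥ 0 and z ∈ ℂ²) and satisfies ρ(z) > 0 for all z ≠ 0. Assume that at every point z ∈ ℂ² \ {0} the Levi matrix of u = log ρ is positive semidefinite and has determinant zero (i.e. u is plurisubharmonic and satisfies the homogeneous complex Monge–Ampère equation (dd^c u)² = 0 on ℂ² \ {0}). Then ρ(λ·z) = |λ|^{2k}·ρ(z) for every λ ∈ ℂ and z ∈ ℂ²; that is, ρ is a homogeneous polynomial of bidegree (k,k). -/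

import Mathlib

open Complex Matrix
open scoped ComplexOrder

/-- The Wirtinger derivative `∂f/∂z_μ` of an `ℝ`-differentiable function `f : ℂⁿ → ℂ`. -/
noncomputable def wD {n : ℕ} (f : (Fin n → ℂ) → ℂ) (z : Fin n → ℂ) (μ : Fin n) : ℂ :=
  (1 / 2 : ℂ) *
    (fderiv ℝ f z (Pi.single μ 1) - Complex.I * fderiv ℝ f z (Pi.single μ Complex.I))

/-- The conjugate Wirtinger derivative `∂f/∂z̄_μ`. -/
noncomputable def wDbar {n : ℕ} (f : (Fin n → ℂ) → ℂ) (z : Fin n → ℂ) (μ : Fin n) : ℂ :=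
  (1 / 2 : ℂ) *
    (fderiv ℝ f z (Pi.single μ 1) + Complex.I * fderiv ℝ f z (Pi.single μ Complex.I))

/-- The Levi matrix `ρ_{μν̄} = ∂²ρ/∂z_μ∂z̄_ν` of a real-valued function `ρ : ℂⁿ → ℝ`. -/
noncomputable def levi {n : ℕ} (ρ : (Fin n → ℂ) → ℝ) (z : Fin n → ℂ) :
    Matrix (Fin n) (Fin n) ℂ :=
  Matrix.of fun μ ν => wD (fun w => wDbar (fun w' => (ρ w' : ℂ)) w ν) z μ

private lemma levi_entry {n : ℕ} {u : (Fin n → ℂ) → ℝ} {z : Fin n → ℂ}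
    (hu : ContDiffAt ℝ 2 u z) (μ ν : Fin n) :
    levi u z μ ν = (1/4 : ℂ) *
      ((fderiv ℝ (fderiv ℝ u) z (Pi.single μ 1) (Pi.single ν 1) : ℂ)
        + Complex.I * (fderiv ℝ (fderiv ℝ u) z (Pi.single μ 1) (Pi.single ν Complex.I) : ℂ)
        - Complex.I * (fderiv ℝ (fderiv ℝ u) z (Pi.single μ Complex.I) (Pi.single ν 1) : ℂ)
        + (fderiv ℝ (fderiv ℝ u) z (Pi.single μ Complex.I) (Pi.single ν Complex.I) : ℂ)) := by
  set G := fderiv ℝ u with hGdef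
  set H := fderiv ℝ G z with hHdef
  have hev : ∀ᶠ w in nhds z, DifferentiableAt ℝ u w := by
    have := hu.eventually (by simp)
    filter_upwards [this] with w hw
    exact hw.differentiableAt (by norm_num)
  have hG1 : ContDiffAt ℝ 1 G z := hu.fderiv_right le_rfl
  have hGd : DifferentiableAt ℝ G z := hG1.differentiableAt one_ne_zero
  -- the inner function eventually equals an explicit formula
  have hinner : (fun w => wDbar (fun w' => (u w' : ℂ)) w ν) =ᶠ[nhds z]
      (fun w => (1/2 : ℂ) * ((G w (Pi.single ν 1) : ℂ) + Complex.I * (G w (Pi.single ν Complex.I) : ℂ))) := by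
    filter_upwards [hev] with w hw
    have hfd : HasFDerivAt (fun w' => (u w' : ℂ)) (Complex.ofRealCLM.comp (G w)) w :=
      Complex.ofRealCLM.hasFDerivAt.comp w hw.hasFDerivAt
    rw [wDbar, hfd.fderiv]
    simp
  -- derivative of the explicit formula
  have happ : ∀ (e : Fin n → ℂ), HasFDerivAt (fun w => G w e)
      ((ContinuousLinearMap.apply ℝ ℝ e).comp H) z := by
    intro e
    exact (ContinuousLinearMap.apply ℝ ℝ e).hasFDerivAt.comp z hGd.hasFDerivAt
  have hF : HasFDerivAt
      (fun w => (1/2 : ℂ) * ((G w (Pi.single ν 1) : ℂ) + Complex.I * (G w (Pi.single ν Complex.I) : ℂ)))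
      ((1/2 : ℂ) • (Complex.ofRealCLM.comp ((ContinuousLinearMap.apply ℝ ℝ (Pi.single ν 1)).comp H)
        + Complex.I • Complex.ofRealCLM.comp ((ContinuousLinearMap.apply ℝ ℝ (Pi.single ν Complex.I)).comp H))) z := by
    have h1 := Complex.ofRealCLM.hasFDerivAt.comp z (happ (Pi.single ν 1))
    have h2 := Complex.ofRealCLM.hasFDerivAt.comp z (happ (Pi.single ν Complex.I))
    have h2' := h2.const_mul Complex.I
    have := (h1.add h2').const_mul (1/2 : ℂ)
    convert this using 2
    · rfl
    · rfl
    · rfl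
    · rfl
    · simp [smul_smul]
  rw [levi]
  show wD _ z μ = _
  rw [wD, Filter.EventuallyEq.fderiv_eq hinner, hF.fderiv]
  simp only [ContinuousLinearMap.smul_apply, ContinuousLinearMap.add_apply,
    ContinuousLinearMap.coe_comp', Function.comp_apply, ContinuousLinearMap.apply_apply,
    Complex.ofRealCLM_apply, smul_eq_mul]
  ring_nf
  rw [Complex.I_sq]
  ring

set_option maxHeartbeats 1600000 in
private lemma levi_quad {u : (Fin 2 → ℂ) → ℝ} {z : Fin 2 → ℂ}
    (hu : ContDiffAt ℝ 2 u z) (c : Fin 2 → ℂ) :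
    fderiv ℝ (fderiv ℝ u) z c c
      + fderiv ℝ (fderiv ℝ u) z (Complex.I • c) (Complex.I • c)
      = 4 * (star (star c) ⬝ᵥ (levi u z) *ᵥ (star c)).re := by
  set H := fderiv ℝ (fderiv ℝ u) z with hH
  have hsym : ∀ v w, H v w = H w v := hu.isSymmSndFDerivAt (by simp)
  set a0 := (c 0).re; set b0 := (c 0).im; set a1 := (c 1).re; set b1 := (c 1).im
  have hc : c = a0 • (Pi.single 0 1 : Fin 2 → ℂ) + b0 • (Pi.single 0 Complex.I : Fin 2 → ℂ)
      + a1 • (Pi.single 1 1 : Fin 2 → ℂ) + b1 • (Pi.single 1 Complex.I : Fin 2 → ℂ) := by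
    funext j
    fin_cases j <;>
      simp [Pi.single_apply, Complex.real_smul, Complex.ext_iff, a0, b0, a1, b1] <;> ring
  have hic : Complex.I • c = (-b0) • (Pi.single 0 1 : Fin 2 → ℂ) + a0 • (Pi.single 0 Complex.I : Fin 2 → ℂ)
      + (-b1) • (Pi.single 1 1 : Fin 2 → ℂ) + a1 • (Pi.single 1 Complex.I : Fin 2 → ℂ) := by
    funext j
    fin_cases j <;>
      simp [Pi.single_apply, Complex.real_smul, Complex.ext_iff, a0, b0, a1, b1] <;> ring
  have hstar0 : (star c) 0 = Complex.ofReal a0 - Complex.ofReal b0 * Complex.I := by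
    simp [Complex.ext_iff, a0, b0, a1, b1]
  have hstar1 : (star c) 1 = Complex.ofReal a1 - Complex.ofReal b1 * Complex.I := by
    simp [Complex.ext_iff, a0, b0, a1, b1]
  have hcc0 : c 0 = Complex.ofReal a0 + Complex.ofReal b0 * Complex.I := (Complex.re_add_im _).symm
  have hcc1 : c 1 = Complex.ofReal a1 + Complex.ofReal b1 * Complex.I := (Complex.re_add_im _).symm
  rw [star_star]
  rw [show (H c) c + (H (Complex.I • c)) (Complex.I • c)
      = (H c) c + (H (Complex.I • c)) (Complex.I • c) from rfl]
  nth_rewrite 1 [hc]; nth_rewrite 1 [hc]; rw [hic]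
  simp only [dotProduct, mulVec, Fin.sum_univ_two, map_add, _root_.map_smul,
    ContinuousLinearMap.add_apply, ContinuousLinearMap.smul_apply, smul_eq_mul,
    levi_entry hu, hstar0, hstar1, hcc0, hcc1]
  simp only [Complex.add_re, Complex.sub_re, Complex.mul_re, Complex.mul_im, Complex.add_im,
    Complex.sub_im, Complex.I_re, Complex.I_im, Complex.ofReal_re, Complex.ofReal_im]
  ring_nf
  rw [hsym (Pi.single 0 Complex.I) (Pi.single 0 1),
    hsym (Pi.single 1 1) (Pi.single 0 1), hsym (Pi.single 1 1) (Pi.single 0 Complex.I),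
    hsym (Pi.single 1 Complex.I) (Pi.single 0 1),
    hsym (Pi.single 1 Complex.I) (Pi.single 0 Complex.I),
    hsym (Pi.single 1 Complex.I) (Pi.single 1 1)]
  simp only [show ((1:ℂ)/4).re = (1/4 : ℝ) by norm_num]
  ring

/-- A convex periodic function on `ℝ` is constant. -/
lemma convexOn_periodic_const {f : ℝ → ℝ} (hf : ConvexOn ℝ Set.univ f) {T : ℝ} (hT : 0 < T)
    (hper : Function.Periodic f T) (x y : ℝ) : f x = f y := by
  suffices h : ∀ a b : ℝ, f b ≤ f a from le_antisymm (h y x) (h x y)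
  intro a b
  obtain ⟨n, hn⟩ := exists_nat_gt (|b - a| / T)
  have hnT : |b - a| < n * T := by
    rw [div_lt_iff₀ hT] at hn; linarith
  have h1 : a - n * T ≤ b := by
    have := abs_le.1 (le_of_lt (lt_of_le_of_lt (le_refl |b-a|) hnT)) |>.1
    have := neg_abs_le (b - a); linarith [abs_le.1 hnT.le]
  have h2 : b ≤ a + n * T := by linarith [abs_le.1 hnT.le]
  have hpq : a - n * T ≤ a + n * T := by linarith
  have hmem : b ∈ segment ℝ (a - n * T) (a + n * T) := by
    rw [segment_eq_Icc hpq]; exact ⟨h1, h2⟩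
  have := hf.le_on_segment (Set.mem_univ _) (Set.mem_univ _) hmem
  rwa [hper.sub_nat_mul_eq, (hper.nat_mul n) a, max_self] at this

/-- Burns's problem in dimension 2: a positive plurisubharmonic homogeneous polynomial
`ρ` of degree `2k` on `ℂ²` whose logarithm solves the homogeneous complex Monge–Ampère
equation is bihomogeneous of bidegree `(k, k)`. -/
theorem burns_problem_dim_two (k : ℕ) (hk : 1 ≤ k) (ρ : (Fin 2 → ℂ) → ℝ)
    (P : MvPolynomial (Fin 4) ℝ)
    (hpoly : ∀ z : Fin 2 → ℂ,
      ρ z = MvPolynomial.eval ![(z 0).re, (z 0).im, (z 1).re, (z 1).im] P)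
    (hhom : ∀ t : ℝ, 0 ≤ t → ∀ z : Fin 2 → ℂ, ρ (t • z) = t ^ (2 * k) * ρ z)
    (hpos : ∀ z : Fin 2 → ℂ, z ≠ 0 → 0 < ρ z)
    (hpsh : ∀ z : Fin 2 → ℂ, z ≠ 0 →
      (levi (fun w => Real.log (ρ w)) z).PosSemidef)
    (hMA : ∀ z : Fin 2 → ℂ, z ≠ 0 →
      (levi (fun w => Real.log (ρ w)) z).det = 0) :
    ∀ (lam : ℂ) (z : Fin 2 → ℂ), ρ (lam • z) = ‖lam‖ ^ (2 * k) * ρ z := by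
  have h2k : (2 * k : ℕ) ≠ 0 := by positivity
  -- smoothness of ρ
  have hρsm : ContDiff ℝ 2 ρ := by
    have hfun : ρ = fun z : Fin 2 → ℂ =>
        MvPolynomial.eval ![(z 0).re, (z 0).im, (z 1).re, (z 1).im] P := funext hpoly
    rw [hfun]
    refine contDiff_iff_contDiffAt.2 fun z => ?_
    have h : AnalyticAt ℝ (fun z : Fin 2 → ℂ =>
        MvPolynomial.aeval (fun i => ![(z 0).re, (z 0).im, (z 1).re, (z 1).im] i) P) z := by
      apply AnalyticAt.aeval_mvPolynomial
      intro i
      fin_cases i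
      · exact Complex.reCLM.analyticAt _ |>.comp ((ContinuousLinearMap.proj 0 : (Fin 2 → ℂ) →L[ℝ] ℂ).analyticAt z)
      · exact Complex.imCLM.analyticAt _ |>.comp ((ContinuousLinearMap.proj 0 : (Fin 2 → ℂ) →L[ℝ] ℂ).analyticAt z)
      · exact Complex.reCLM.analyticAt _ |>.comp ((ContinuousLinearMap.proj 1 : (Fin 2 → ℂ) →L[ℝ] ℂ).analyticAt z)
      · exact Complex.imCLM.analyticAt _ |>.comp ((ContinuousLinearMap.proj 1 : (Fin 2 → ℂ) →L[ℝ] ℂ).analyticAt z)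
    exact h.contDiffAt
  set u : (Fin 2 → ℂ) → ℝ := fun w => Real.log (ρ w) with hu_def
  have husm : ∀ w : Fin 2 → ℂ, w ≠ 0 → ContDiffAt ℝ 2 u w := fun w hw =>
    (Real.contDiffAt_log.2 (hpos w hw).ne').comp w hρsm.contDiffAt
  set G := fderiv ℝ u with hG_def
  set H := fun w => fderiv ℝ G w with hH_def
  -- the logarithmic homogeneity
  have hlog : ∀ w : Fin 2 → ℂ, w ≠ 0 → ∀ t : ℝ, 0 < t →
      u (t • w) = 2 * k * Real.log t + u w := by
    intro w hw t ht
    simp only [hu_def, hhom t ht.le w]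
    rw [Real.log_mul (by positivity) (hpos w hw).ne', Real.log_pow]
    push_cast; ring
  -- first Euler identity along rays
  have hE1 : ∀ w : Fin 2 → ℂ, w ≠ 0 → ∀ t : ℝ, 0 < t → G (t • w) w = 2 * k / t := by
    intro w hw t ht
    have htw : t • w ≠ 0 := smul_ne_zero ht.ne' hw
    have hchain : HasDerivAt (fun s : ℝ => u (s • w)) (G (t • w) w) t := by
      have hsw : HasDerivAt (fun s : ℝ => s • w) w t := by
        simpa using (hasDerivAt_id t).smul_const w
      exact (((husm _ htw).differentiableAt (by norm_num)).hasFDerivAt).comp_hasDerivAt t hsw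
    have heq : (fun s : ℝ => u (s • w)) =ᶠ[nhds t] fun s => 2 * k * Real.log s + u w := by
      filter_upwards [isOpen_Ioi.mem_nhds (Set.mem_Ioi.2 ht)] with s hs
      exact hlog w hw s hs
    have hchain' : HasDerivAt (fun s : ℝ => 2 * k * Real.log s + u w) (G (t • w) w) t :=
      hchain.congr_of_eventuallyEq heq.symm
    have hrhs : HasDerivAt (fun s : ℝ => 2 * k * Real.log s + u w) (2 * k / t) t := by
      simpa [div_eq_mul_inv, mul_comm, mul_assoc] using
        ((Real.hasDerivAt_log ht.ne').const_mul (2 * k : ℝ)).add_const (u w)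
    exact hchain'.unique hrhs
  have hEuler1 : ∀ w : Fin 2 → ℂ, w ≠ 0 → G w w = 2 * k := by
    intro w hw
    simpa using hE1 w hw 1 one_pos
  -- second Euler identity
  have hEuler2 : ∀ w : Fin 2 → ℂ, w ≠ 0 → H w w w = -(2 * k) := by
    intro w hw
    have hHd : HasFDerivAt G (H w) w :=
      (((husm w hw).fderiv_right (m := 1) le_rfl).differentiableAt one_ne_zero).hasFDerivAt
    have hsw : HasDerivAt (fun s : ℝ => s • w) w 1 := by
      simpa using (hasDerivAt_id (1:ℝ)).smul_const w
    have h1 : HasDerivAt (fun s : ℝ => G (s • w)) (H w w) 1 := by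
      have hHd' : HasFDerivAt G (H w) ((1:ℝ) • w) := by rwa [one_smul]
      exact hHd'.comp_hasDerivAt 1 hsw
    have h2 : HasDerivAt (fun s : ℝ => G (s • w) w) (H w w w) 1 := by
      have := h1.clm_apply (hasDerivAt_const 1 w)
      simpa using this
    have heq : (fun s : ℝ => G (s • w) w) =ᶠ[nhds 1] fun s => 2 * k / s := by
      filter_upwards [isOpen_Ioi.mem_nhds (Set.mem_Ioi.2 one_pos)] with s hs
      exact hE1 w hw s hs
    have h3 : HasDerivAt (fun s : ℝ => 2 * k / s) (H w w w) 1 :=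
      h2.congr_of_eventuallyEq heq.symm
    have h4 : HasDerivAt (fun s : ℝ => 2 * k / s) (-(2 * k)) 1 := by
      simpa [div_eq_mul_inv] using (hasDerivAt_inv one_ne_zero).const_mul (2 * k : ℝ)
    exact h3.unique h4
  -- invariance under the circle action
  have hcirc : ∀ z : Fin 2 → ℂ, z ≠ 0 → ∀ θ : ℝ, ρ (Complex.exp (θ * Complex.I) • z) = ρ z := by
    intro z hz θ
    set c : ℝ → (Fin 2 → ℂ) := fun θ => Complex.exp (θ * Complex.I) • z with hc_def
    have hcne : ∀ θ, c θ ≠ 0 := fun θ => smul_ne_zero (Complex.exp_ne_zero _) hz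
    set ψ : ℝ → ℝ := fun θ => u (c θ) with hψ_def
    have hce : ∀ θ : ℝ, HasDerivAt c (Complex.I • c θ) θ := by
      intro θ
      have h0 : HasDerivAt (fun θ : ℝ => (θ : ℂ) * Complex.I) Complex.I θ := by
        simpa using (Complex.ofRealCLM.hasFDerivAt.hasDerivAt (x := θ)).mul_const Complex.I
      have h1 : HasDerivAt (fun θ : ℝ => Complex.exp (θ * Complex.I))
          (Complex.exp (θ * Complex.I) * Complex.I) θ := h0.cexp
      have := h1.smul_const z
      rw [show Complex.I • c θ = (Complex.exp (θ * Complex.I) * Complex.I) • z by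
        rw [hc_def]; beta_reduce; rw [smul_smul, mul_comm Complex.I]]
      exact this
    have hψ1 : ∀ θ : ℝ, HasDerivAt ψ (G (c θ) (Complex.I • c θ)) θ := by
      intro θ
      exact (((husm _ (hcne θ)).differentiableAt (by norm_num)).hasFDerivAt).comp_hasDerivAt θ (hce θ)
    have hψ2 : ∀ θ : ℝ, HasDerivAt (fun θ => G (c θ) (Complex.I • c θ))
        (H (c θ) (Complex.I • c θ) (Complex.I • c θ) - G (c θ) (c θ)) θ := by
      intro θ
      have hHd : HasFDerivAt G (H (c θ)) (c θ) :=
        (((husm _ (hcne θ)).fderiv_right (m := 1) le_rfl).differentiableAt one_ne_zero).hasFDerivAt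
      have h1 : HasDerivAt (fun θ => G (c θ)) (H (c θ) (Complex.I • c θ)) θ :=
        hHd.comp_hasDerivAt θ (hce θ)
      have h2 : HasDerivAt (fun θ => Complex.I • c θ) (Complex.I • (Complex.I • c θ)) θ :=
        (hce θ).const_smul Complex.I
      have h3 := h1.clm_apply h2
      have hii : Complex.I • (Complex.I • c θ) = -(c θ) := by
        rw [smul_smul, Complex.I_mul_I, neg_one_smul]
      rw [hii] at h3
      simpa [sub_eq_add_neg] using h3
    -- second derivative is nonnegative
    have hψ2nonneg : ∀ θ : ℝ,
        0 ≤ H (c θ) (Complex.I • c θ) (Complex.I • c θ) - G (c θ) (c θ) := by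
      intro θ
      have hq := levi_quad (husm _ (hcne θ)) (c θ)
      have hpsd := (hpsh (c θ) (hcne θ)).dotProduct_mulVec_nonneg (star (c θ))
      have hre : 0 ≤ (star (star (c θ)) ⬝ᵥ (levi u (c θ)) *ᵥ (star (c θ))).re :=
        (Complex.le_def.1 hpsd).1
      have := hEuler1 (c θ) (hcne θ)
      have h2 := hEuler2 (c θ) (hcne θ)
      nlinarith [hq, hre]
    -- ψ is convex
    have hψconv : ConvexOn ℝ Set.univ ψ := by
      have hd1 : Differentiable ℝ ψ := fun θ => (hψ1 θ).differentiableAt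
      have hderiv : deriv ψ = fun θ => G (c θ) (Complex.I • c θ) := funext fun θ => (hψ1 θ).deriv
      have hd2 : Differentiable ℝ (deriv ψ) := by
        rw [hderiv]; exact fun θ => (hψ2 θ).differentiableAt
      refine convexOn_univ_of_deriv2_nonneg hd1 hd2 fun θ => ?_
      have : deriv^[2] ψ θ = deriv (deriv ψ) θ := by
        simp [Function.iterate_succ, Function.iterate_one]
      rw [this, hderiv, (hψ2 θ).deriv]
      exact hψ2nonneg θ
    -- ψ is periodic
    have hψper : Function.Periodic ψ (2 * Real.pi) := by
      intro θ
      have : c (θ + 2 * Real.pi) = c θ := by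
        rw [hc_def]
        beta_reduce
        congr 1
        push_cast
        rw [add_mul, Complex.exp_add, Complex.exp_two_pi_mul_I, mul_one]
      simp [hψ_def, this]
    have hconst := convexOn_periodic_const hψconv Real.two_pi_pos hψper θ 0
    have hc0 : c 0 = z := by simp [hc_def]
    rw [hψ_def] at hconst
    simp only [hc0] at hconst
    -- from log equality to equality
    have := hpos z hz
    have h1 := hpos _ (hcne θ)
    have : Real.log (ρ (c θ)) = Real.log (ρ z) := hconst
    have := Real.log_injOn_pos (Set.mem_Ioi.2 h1) (Set.mem_Ioi.2 (hpos z hz)) this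
    exact this
  -- ρ vanishes at the origin
  have hρ0 : ρ 0 = 0 := by
    have := hhom 0 le_rfl 0
    rw [smul_zero, zero_pow h2k, zero_mul] at this
    exact this
  -- conclusion
  intro lam z
  by_cases hz : z = 0
  · subst hz; rw [smul_zero, hρ0, mul_zero]
  by_cases hlam : lam = 0
  · subst hlam
    rw [zero_smul, hρ0, norm_zero, zero_pow h2k, zero_mul]
  · have habs : (‖lam‖ : ℂ) * Complex.exp (lam.arg * Complex.I) = lam :=
      Complex.norm_mul_exp_arg_mul_I lam
    have hsmul : lam • z = (‖lam‖ : ℝ) • (Complex.exp (lam.arg * Complex.I) • z) := by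
      funext j
      simp only [Pi.smul_apply, smul_eq_mul, Complex.real_smul]
      rw [← mul_assoc, habs]
    rw [hsmul, hhom _ (norm_nonneg lam) _, hcirc z hz]
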